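/- Let k ≤ n and l ≤ m be integers and let f₁, f₂ be Laurent polynomials as in the context, with nonzero extreme coefficients a_k, a_n, b_l, b_m. Then b_l^{−k} · b_m^{n} · Π^{[1]} = (−1)^{k(m−l)} · a_n^{m−l} · b_m^{n−k} · ∏_{x ∈ X} ∏_{y ∈ Y} (y − x), where the double product is over the multisets of roots X of P₁ and Y of P₂ counted with multiplicity. -/

import Mathlib

open Polynomial

private lemma prod_map_zpow' (s : Multiset ℂ) (k : ℤ) :
    (s.map (· ^ k)).prod = s.prod ^ k := by
  induction s using Multiset.induction with
  | empty => simp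
  | cons a s ih => simp [ih, mul_zpow]

private lemma prod_swap' (s t : Multiset ℂ) (f : ℂ → ℂ → ℂ) :
    (s.map (fun a => (t.map (fun b => f a b)).prod)).prod
      = (t.map (fun b => (s.map (fun a => f a b)).prod)).prod := by
  induction t using Multiset.induction with
  | empty => simp
  | cons b t ih => simp [Multiset.prod_map_mul, ih]

/-- With `f₁ z = z^k * P₁ z`, `f₂ z = z^l * P₂ z` Laurent polynomials with
nonzero extreme coefficients,
`b_l^{-k} * b_m^n * Π^{[1]} = (-1)^{k(m-l)} * a_n^{m-l} * b_m^{n-k} * ∏_{x∈X} ∏_{y∈Y} (y - x)`,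
where `X`, `Y` are the multisets of roots of `P₁`, `P₂` and
`Π^{[1]} = ∏_{y∈Y} f₁(y)`. -/
theorem stmt15 (k n l m : ℤ) (hkn : k ≤ n) (hlm : l ≤ m)
    (P₁ P₂ : Polynomial ℂ)
    (hd₁ : P₁.natDegree = (n - k).toNat) (hd₂ : P₂.natDegree = (m - l).toNat)
    (ak an bl bm : ℂ)
    (hak : P₁.coeff 0 = ak) (han : P₁.leadingCoeff = an)
    (hbl : P₂.coeff 0 = bl) (hbm : P₂.leadingCoeff = bm)
    (hak0 : ak ≠ 0) (han0 : an ≠ 0) (hbl0 : bl ≠ 0) (hbm0 : bm ≠ 0) :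
    bl ^ (-k) * bm ^ n * (P₂.roots.map fun y => y ^ k * P₁.eval y).prod =
      (-1 : ℂ) ^ (k * (m - l)) * an ^ (m - l) * bm ^ (n - k) *
        (P₁.roots.map fun x => (P₂.roots.map fun y => y - x).prod).prod := by
  set r1 := P₁.roots with hr1
  set r2 := P₂.roots with hr2
  have hc2 : r2.card = (m - l).toNat := by
    rw [hr2, (splits_iff_card_roots).mp (IsAlgClosed.splits P₂), hd₂]
  have hc2' : ((m - l).toNat : ℤ) = m - l := Int.toNat_of_nonneg (sub_nonneg.mpr hlm)
  -- P₁ factors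
  have heq1 : P₁ = C an * (r1.map fun a => X - C a).prod := by
    rw [← han]; exact (IsAlgClosed.splits P₁).eq_prod_roots
  have hev1 : ∀ y : ℂ, P₁.eval y = an * (r1.map fun x => y - x).prod := by
    intro y
    conv_lhs => rw [heq1]
    simp [eval_multiset_prod, Multiset.map_map, Function.comp]
  -- product of roots of P₂
  have heq2 : P₂ = C bm * (r2.map fun a => X - C a).prod := by
    rw [← hbm]; exact (IsAlgClosed.splits P₂).eq_prod_roots
  have hbl' : bl = bm * (-1) ^ (m - l) * r2.prod := by
    have h0 : P₂.eval 0 = bl := by rw [← coeff_zero_eq_eval_zero, hbl]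
    rw [← h0]
    conv_lhs => rw [heq2]
    simp only [eval_mul, eval_C, eval_multiset_prod, Multiset.map_map, Function.comp]
    simp only [eval_sub, eval_X, eval_C, zero_sub]
    have : (r2.map fun x => -x).prod = (-1) ^ r2.card * r2.prod := by
      induction r2 using Multiset.induction with
      | empty => simp
      | cons a s ih => simp [ih]; ring
    rw [this, hc2, mul_assoc]
    congr 2
    rw [← zpow_natCast (-1 : ℂ), hc2']
  have hbm0' : (bm : ℂ) ≠ 0 := hbm0
  have hprod2 : r2.prod = (-1) ^ (m - l) * bl * bm⁻¹ := by
    have hm1 : ((-1 : ℂ) ^ (m - l)) * ((-1 : ℂ) ^ (m - l)) = 1 := by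
      rw [← zpow_add₀ (by norm_num : (-1:ℂ) ≠ 0)]
      have : (m - l) + (m - l) = 2 * (m - l) := by ring
      rw [this, zpow_mul]; norm_num
    have h2 : (-1:ℂ) ^ (m - l) * bl * bm⁻¹
        = ((-1:ℂ) ^ (m - l) * (-1:ℂ) ^ (m - l)) * (bm * bm⁻¹) * r2.prod := by
      rw [hbl']; ring
    rw [h2, hm1, mul_inv_cancel₀ hbm0, one_mul, one_mul]
  -- compute the big product
  have hmain : (r2.map fun y => y ^ k * P₁.eval y).prod
      = r2.prod ^ k * an ^ ((m - l).toNat)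
        * (r1.map fun x => (r2.map fun y => y - x).prod).prod := by
    have : (r2.map fun y => y ^ k * P₁.eval y).prod
        = (r2.map fun y => y ^ k).prod * (r2.map fun y => P₁.eval y).prod := by
      rw [← Multiset.prod_map_mul]
    rw [this, prod_map_zpow', mul_assoc]
    congr 1
    have : (r2.map fun y => P₁.eval y).prod
        = (r2.map fun y => an * (r1.map fun x => y - x).prod).prod := by
      congr 1; exact Multiset.map_congr rfl fun y _ => hev1 y
    rw [this, Multiset.prod_map_mul, Multiset.map_const', Multiset.prod_replicate, hc2]
    congr 1
    exact prod_swap' r2 r1 (fun y x => y - x)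
  rw [hmain, hprod2]
  have hnegne : (-1 : ℂ) ≠ 0 := by norm_num
  rw [mul_zpow, mul_zpow, ← zpow_mul, inv_zpow, ← zpow_neg]
  rw [← zpow_natCast an, hc2']
  have e1 : bl ^ (-k) * bm ^ n *
      ((-1:ℂ) ^ ((m - l) * k) * bl ^ k * bm ^ (-k) * an ^ (m - l) *
        (r1.map fun x => (r2.map fun y => y - x).prod).prod)
      = ((-1:ℂ) ^ ((m - l) * k)) * (bl ^ (-k) * bl ^ k) * (bm ^ n * bm ^ (-k)) * an ^ (m - l) *
        (r1.map fun x => (r2.map fun y => y - x).prod).prod := by ring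
  rw [e1, ← zpow_add₀ hbl0, ← zpow_add₀ hbm0]
  have : -k + k = 0 := by ring
  rw [this, zpow_zero, mul_one]
  have : n + -k = n - k := by ring
  rw [this]
  have : (m - l) * k = k * (m - l) := by ring
  rw [this]
  ring
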